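/- Let G be a connected simple graph on vertices {0,...,n} with root r, and let DFS(G) be the depth-first search spanning tree of G rooted at r (visiting neighbors in decreasing numerical order). Then the number of κ-inversions of DFS(G) equals g = |E| - |V| + 1, the circuit rank of G. -/

import Mathlib

open Finset

namespace PFG

variable {n : ℕ}

/-- `deg_{Sᶜ}(i)`: the number of edges `{i,j}` of `G` with `j ∉ S`. -/
noncomputable def sDeg (G : SimpleGraph (Fin (n+1))) (S : Finset (Fin (n+1))) (i : Fin (n+1)) : ℕ :=
  Set.ncard {j : Fin (n+1) | G.Adj i j ∧ j ∉ S}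

/-- `P` is a parking function for `G` with respect to the root `r`:
for every nonempty `S ⊆ V \ {r}` there is `i ∈ S` with `P i < deg_{Sᶜ}(i)`. -/
def IsParkingFunction (G : SimpleGraph (Fin (n+1))) (r : Fin (n+1))
    (P : Fin (n+1) → ℕ) : Prop :=
  ∀ S : Finset (Fin (n+1)), S.Nonempty → r ∉ S → ∃ i ∈ S, P i < sDeg G S i

/-- The degree of a parking function: the sum of its values over non-root vertices. -/
def degPF (r : Fin (n+1)) (P : Fin (n+1) → ℕ) : ℕ := ∑ v ∈ univ.erase r, P v

/-- A spanning tree of `G` rooted at `r`, encoded by its parent function: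
each non-root vertex is adjacent (in `G`) to its parent, and iterating
the parent map from any vertex reaches the root. -/
structure RootedSpanningTree (G : SimpleGraph (Fin (n+1))) (r : Fin (n+1)) where
  parent : Fin (n+1) → Fin (n+1)
  parent_root : parent r = r
  adj_parent : ∀ v, v ≠ r → G.Adj (parent v) v
  reaches_root : ∀ v, ∃ k, parent^[k] v = r

/-- `i` is a (proper) ancestor of `j` in the rooted tree with parent map `par`. -/
def IsAncestor (par : Fin (n+1) → Fin (n+1)) (i j : Fin (n+1)) : Prop :=
  ∃ k, 0 < k ∧ par^[k] j = i

/-- An inversion: `i` is an ancestor of `j` and `i > j`. -/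
def IsInversion (par : Fin (n+1) → Fin (n+1)) (i j : Fin (n+1)) : Prop :=
  IsAncestor par i j ∧ j < i

/-- A κ-inversion: an inversion `(i,j)` such that moreover `i` is not the
root and the parent of `i` is adjacent to `j` in `G`. -/
def IsKappaInversion (G : SimpleGraph (Fin (n+1))) (r : Fin (n+1))
    (par : Fin (n+1) → Fin (n+1)) (i j : Fin (n+1)) : Prop :=
  IsAncestor par i j ∧ j < i ∧ i ≠ r ∧ G.Adj (par i) j

/-- the κ-number: the number of κ-inversions. -/
noncomputable def kappaNum (G : SimpleGraph (Fin (n+1))) (r : Fin (n+1))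
    (par : Fin (n+1) → Fin (n+1)) : ℕ :=
  Set.ncard {p : Fin (n+1) × Fin (n+1) | IsKappaInversion G r par p.1 p.2}

/-- the number of inversions. -/
noncomputable def invNum (par : Fin (n+1) → Fin (n+1)) : ℕ :=
  Set.ncard {p : Fin (n+1) × Fin (n+1) | IsInversion par p.1 p.2}

open Classical in
/-- The neighbors of `i` in `G`, listed in decreasing order. -/
noncomputable def nbrs (G : SimpleGraph (Fin (n+1))) (i : Fin (n+1)) : List (Fin (n+1)) :=
  ((univ.filter (fun j => G.Adj i j)).sort (· ≤ ·)).reverse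

/-- One step of depth-first search from vertex `i`: scan the neighbors of `i`
in decreasing order; each unvisited neighbor `j` is visited, gets parent `i`,
and the search recurses from `j`.  The state is the pair
(visited vertices, parent map). -/
noncomputable def dfsStep (G : SimpleGraph (Fin (n+1))) :
    ℕ → Fin (n+1) → Finset (Fin (n+1)) × (Fin (n+1) → Fin (n+1)) →
      Finset (Fin (n+1)) × (Fin (n+1) → Fin (n+1))
  | 0, _, st => st
  | (fuel+1), i, st =>
      (nbrs G i).foldl
        (fun st j =>
          if j ∈ st.1 then st
          else dfsStep G fuel j (insert j st.1, Function.update st.2 j i)) st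

/-- The parent map of the depth-first search tree of `G` rooted at `r`,
visiting neighbors in decreasing numerical order. -/
noncomputable def dfsParent (G : SimpleGraph (Fin (n+1))) (r : Fin (n+1)) :
    Fin (n+1) → Fin (n+1) :=
  (dfsStep G (n+1) r ({r}, fun _ => r)).2

/-- The set of edges of the rooted tree given by parent map `par`. -/
def treeEdges (r : Fin (n+1)) (par : Fin (n+1) → Fin (n+1)) : Set (Sym2 (Fin (n+1))) :=
  {e | ∃ v, v ≠ r ∧ e = s(par v, v)}


def ChainK (f : Fin (n+1) → Fin (n+1)) (A : Set (Fin (n+1))) (v x : Fin (n+1)) (k : ℕ) : Prop :=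
  f^[k] v = x ∧ ∀ m < k, f^[m] v ∈ A

abbrev St (n : ℕ) := Finset (Fin (n+1)) × (Fin (n+1) → Fin (n+1))

def NSet (s s' : St n) : Set (Fin (n+1)) := {v | v ∈ s'.1 ∧ v ∉ s.1}

structure Post (G : SimpleGraph (Fin (n+1))) (i : Fin (n+1)) (s s' : St n) : Prop where
  mono : s.1 ⊆ s'.1
  frozen : ∀ v ∈ s.1, s'.2 v = s.2 v
  adj : ∀ v ∈ NSet s s', G.Adj (s'.2 v) v
  chain : ∀ v ∈ NSet s s', ∃ k, 0 < k ∧ ChainK s'.2 (NSet s s') v i k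
  closed_i : ∀ b, G.Adj i b → b ∈ s'.1
  closed : ∀ v ∈ NSet s s', ∀ b, G.Adj v b → b ∈ s'.1
  compar : ∀ a b, a ∈ NSet s s' → b ∈ NSet s s' → G.Adj a b →
    a = b ∨ (∃ k, 0 < k ∧ ChainK s'.2 (NSet s s') b a k) ∨
      (∃ k, 0 < k ∧ ChainK s'.2 (NSet s s') a b k)
  order : ∀ a b c, (a = i ∨ a ∈ NSet s s') → b ∈ NSet s s' → c ∈ NSet s s' →
    s'.2 c = a → G.Adj a b → b ≠ c →
    (∃ k, 0 < k ∧ ChainK s'.2 (NSet s s') b c k) → b < c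

structure FoldPost (G : SimpleGraph (Fin (n+1))) (i : Fin (n+1)) (l : List (Fin (n+1)))
    (s s' : St n) : Prop where
  mono : s.1 ⊆ s'.1
  frozen : ∀ v ∈ s.1, s'.2 v = s.2 v
  adj : ∀ v ∈ NSet s s', G.Adj (s'.2 v) v
  chain : ∀ v ∈ NSet s s', ∃ k, 0 < k ∧ ChainK s'.2 (NSet s s') v i k
  elems : ∀ j ∈ l, j ∈ s'.1
  closed : ∀ v ∈ NSet s s', ∀ b, G.Adj v b → b ∈ s'.1
  compar : ∀ a b, a ∈ NSet s s' → b ∈ NSet s s' → G.Adj a b →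
    a = b ∨ (∃ k, 0 < k ∧ ChainK s'.2 (NSet s s') b a k) ∨
      (∃ k, 0 < k ∧ ChainK s'.2 (NSet s s') a b k)
  order : ∀ a b c, (a = i ∨ a ∈ NSet s s') → b ∈ NSet s s' → c ∈ NSet s s' →
    s'.2 c = a → G.Adj a b → b ≠ c →
    (∃ k, 0 < k ∧ ChainK s'.2 (NSet s s') b c k) → b < c

theorem mem_nbrs {G : SimpleGraph (Fin (n+1))} {i j : Fin (n+1)} :
    j ∈ nbrs G i ↔ G.Adj i j := by
  classical
  simp [nbrs, Finset.mem_sort]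

theorem nbrs_pairwise (G : SimpleGraph (Fin (n+1))) (i : Fin (n+1)) :
    (nbrs G i).Pairwise (· > ·) := by
  classical
  have h1 := (Finset.sortedLT_sort (univ.filter (fun j => G.Adj i j))).pairwise
  exact List.pairwise_reverse.mpr h1

theorem iterate_congr {f g : Fin (n+1) → Fin (n+1)} {A : Set (Fin (n+1))} {v : Fin (n+1)}
    (hfg : ∀ y ∈ A, g y = f y) {k : ℕ} (hmem : ∀ m < k, f^[m] v ∈ A) :
    ∀ m ≤ k, g^[m] v = f^[m] v := by
  intro m hm
  induction m with
  | zero => simp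
  | succ m ih =>
    rw [Function.iterate_succ_apply', Function.iterate_succ_apply',
      ih (le_trans (Nat.le_succ m) hm)]
    exact hfg _ (hmem m (lt_of_lt_of_le (Nat.lt_succ_self m) hm))

theorem chainK_congr {f g : Fin (n+1) → Fin (n+1)} {A : Set (Fin (n+1))} {v x : Fin (n+1)} {k : ℕ}
    (hfg : ∀ y ∈ A, g y = f y) (h : ChainK f A v x k) : ChainK g A v x k := by
  obtain ⟨hk, hmem⟩ := h
  refine ⟨?_, fun m hm => ?_⟩
  · rw [iterate_congr hfg hmem k le_rfl]; exact hk
  · rw [iterate_congr hfg hmem m (le_of_lt hm)]; exact hmem m hm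

theorem chainK_mono {f : Fin (n+1) → Fin (n+1)} {A B : Set (Fin (n+1))} {v x : Fin (n+1)} {k : ℕ}
    (hAB : A ⊆ B) (h : ChainK f A v x k) : ChainK f B v x k :=
  ⟨h.1, fun m hm => hAB (h.2 m hm)⟩

theorem chainK_comp {f : Fin (n+1) → Fin (n+1)} {A B : Set (Fin (n+1))} {v x y : Fin (n+1)}
    {k l : ℕ} (h1 : ChainK f A v x k) (h2 : ChainK f B x y l) :
    ChainK f (A ∪ B) v y (k + l) := by
  obtain ⟨hk, hA⟩ := h1
  obtain ⟨hl, hB⟩ := h2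
  have hc : k + l = l + k := Nat.add_comm k l
  refine ⟨by rw [hc, Function.iterate_add_apply, hk]; exact hl, fun m hm => ?_⟩
  rcases lt_or_ge m k with h | h
  · exact Or.inl (hA m h)
  · right
    have : f^[m] v = f^[m - k] x := by
      rw [← hk, ← Function.iterate_add_apply, Nat.sub_add_cancel h]
    rw [this]
    exact hB _ (by omega)

theorem chainK_cmp {f : Fin (n+1) → Fin (n+1)} {A B : Set (Fin (n+1))} {v x y : Fin (n+1)}
    {k l : ℕ} (h1 : ChainK f A v x k) (h2 : ChainK f B v y l) (hkl : k < l) : x ∈ B := by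
  rw [← h1.1]; exact h2.2 k hkl

theorem chainK_eq {f : Fin (n+1) → Fin (n+1)} {A B : Set (Fin (n+1))} {v x y : Fin (n+1)}
    {k : ℕ} (h1 : ChainK f A v x k) (h2 : ChainK f B v y k) : x = y := by
  rw [← h1.1, ← h2.1]

theorem chainK_localize {f : Fin (n+1) → Fin (n+1)} {A P : Set (Fin (n+1))} {i v x : Fin (n+1)}
    {k : ℕ} (hP : ∀ y ∈ P, f y = i ∨ f y ∈ P) (hiA : i ∉ A) (hxA : x ∈ A)
    (hv : v ∈ P) (h : ChainK f A v x k) : ChainK f P v x k := by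
  obtain ⟨hk, hA⟩ := h
  refine ⟨hk, ?_⟩
  intro m hm
  induction m with
  | zero => simpa
  | succ m ih =>
    have hmP : f^[m] v ∈ P := ih (by omega)
    have e := Function.iterate_succ_apply' f m v
    rcases hP _ hmP with h | h
    · exfalso
      have hi : f^[m+1] v = i := by rw [e, h]
      exact hiA (hi ▸ hA _ hm)
    · rw [e]; exact h


theorem chainK_localize2 {f : Fin (n+1) → Fin (n+1)} {A P : Set (Fin (n+1))}
    {i j v x : Fin (n+1)} {k : ℕ}
    (hP : ∀ y ∈ P, f y = j ∨ f y ∈ P) (hj : f j = i) (hiA : i ∉ A)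
    (hxj : x ≠ j) (hxi : x ≠ i) (hv : v ∈ P) (h : ChainK f A v x k) : ChainK f P v x k := by
  obtain ⟨hk, hA⟩ := h
  refine ⟨hk, ?_⟩
  intro m hm
  induction m with
  | zero => simpa
  | succ m ih =>
    have hmP : f^[m] v ∈ P := ih (by omega)
    have e := Function.iterate_succ_apply' f m v
    rcases hP _ hmP with h | h
    · exfalso
      have hj1 : f^[m+1] v = j := by rw [e, h]
      have hj2 : f^[m+2] v = i := by
        have e2 := Function.iterate_succ_apply' f (m+1) v
        rw [e2, hj1, hj]
      rcases lt_or_eq_of_le (Nat.succ_le_of_lt hm) with h2 | h2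
      · exact hiA (hj2 ▸ hA _ h2)
      · exact hxi (by rw [← hk, ← h2, hj2])
    · rw [e]; exact h


variable {G : SimpleGraph (Fin (n+1))}

theorem mem_NSet {s s' : St n} {v : Fin (n+1)} :
    v ∈ NSet s s' ↔ v ∈ s'.1 ∧ v ∉ s.1 := Iff.rfl

theorem fold_post (fuel : ℕ)
    (IH : ∀ (j : Fin (n+1)) (st : St n), j ∈ st.1 → (univ \ st.1).card + 1 ≤ fuel →
      Post G j st (dfsStep G fuel j st)) (i : Fin (n+1)) :
    ∀ (l : List (Fin (n+1))) (s : St n), i ∈ s.1 → (univ \ s.1).card ≤ fuel →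
      l.Pairwise (· > ·) → (∀ j ∈ l, G.Adj i j) →
      (∀ b, G.Adj i b → b ∉ l → b ∈ s.1) →
      FoldPost G i l s
        (l.foldl (fun st j => if j ∈ st.1 then st
          else dfsStep G fuel j (insert j st.1, Function.update st.2 j i)) s) := by
  intro l
  induction l with
  | nil =>
    intro s hi _ _ _ _
    constructor <;> simp [NSet] <;> intros <;> simp_all
  | cons j l' ihl =>
    intro s hi hfuel hpw hadj hpre
    rw [List.foldl_cons]
    by_cases hjs : j ∈ s.1
    · rw [if_pos hjs]
      have P := ihl s hi hfuel hpw.of_cons (fun x hx => hadj x (List.mem_cons_of_mem _ hx))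
        (fun b hb hnb => by
          by_cases hbj : b = j
          · rwa [hbj]
          · exact hpre b hb (by simp [hbj, hnb]))
      refine { P with elems := ?_ }
      intro x hx
      rcases List.mem_cons.mp hx with h | h
      · exact h ▸ P.mono hjs
      · exact P.elems x h
    · rw [if_neg hjs]
      have hit : i ∈ (insert j s.1) := Finset.mem_insert_of_mem hi
      have hjt : j ∈ (insert j s.1) := Finset.mem_insert_self j s.1
      have hcard : (univ \ (insert j s.1 : Finset (Fin (n+1)))).card + 1 ≤ fuel := by
        have hss : (univ \ (insert j s.1 : Finset (Fin (n+1)))) ⊂ univ \ s.1 := by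
          refine Finset.ssubset_iff_of_subset (by
            intro x hx
            simp only [Finset.mem_sdiff, Finset.mem_insert] at hx ⊢
            exact ⟨hx.1, fun h => hx.2 (Or.inr h)⟩) |>.mpr ?_
          exact ⟨j, by simp [hjs], by simp⟩
        have := Finset.card_lt_card hss
        omega
      set t : St n := (insert j s.1, Function.update s.2 j i) with ht
      have P₁ : Post G j t (dfsStep G fuel j t) := IH j t hjt hcard
      set s₁ : St n := dfsStep G fuel j t with hs₁
      have hts₁ : t.1 ⊆ s₁.1 := P₁.mono
      have hss₁ : s.1 ⊆ s₁.1 := fun v hv => hts₁ (Finset.mem_insert_of_mem hv)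
      have hjs₁ : j ∈ s₁.1 := hts₁ hjt
      have hfuel₁ : (univ \ s₁.1).card ≤ fuel := by
        have hsub2 : (univ \ s₁.1) ⊆ univ \ t.1 := by
          intro x hx
          simp only [Finset.mem_sdiff] at hx ⊢
          exact ⟨hx.1, fun h => hx.2 (hts₁ h)⟩
        have h2 := Finset.card_le_card hsub2
        have e : (univ \ t.1).card = (univ \ (insert j s.1 : Finset (Fin (n+1)))).card := rfl
        omega
      have P₂ := ihl s₁ (hss₁ hi) hfuel₁ hpw.of_cons
        (fun x hx => hadj x (List.mem_cons_of_mem _ hx))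
        (fun b hb hnb => by
          by_cases hbj : b = j
          · exact hbj ▸ hjs₁
          · exact hss₁ (hpre b hb (by simp [hbj, hnb])))
      set st' : St n := List.foldl (fun st j => if j ∈ st.1 then st
          else dfsStep G fuel j (insert j st.1, Function.update st.2 j i)) s₁ l' with hst'
      -- basic inclusions
      have hs₁st' : s₁.1 ⊆ st'.1 := P₂.mono
      have hsst' : s.1 ⊆ st'.1 := hss₁.trans hs₁st'
      have hfr : ∀ v ∈ s₁.1, st'.2 v = s₁.2 v := P₂.frozen
      -- membership facts
      have hDs₁ : ∀ v ∈ NSet t s₁, v ∈ s₁.1 := fun v hv => hv.1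
      have hDnotS : ∀ v ∈ NSet t s₁, v ∉ s.1 := fun v hv h =>
        hv.2 (Finset.mem_insert_of_mem h)
      have hDnotj : ∀ v ∈ NSet t s₁, v ≠ j := fun v hv h => hv.2 (h ▸ hjt)
      have hN₂notS₁ : ∀ v ∈ NSet s₁ st', v ∉ s₁.1 := fun v hv => hv.2
      have hjN : j ∈ NSet s st' := ⟨hs₁st' hjs₁, hjs⟩
      have hDN : ∀ v ∈ NSet t s₁, v ∈ NSet s st' :=
        fun v hv => ⟨hs₁st' (hDs₁ v hv), hDnotS v hv⟩
      have hN₂N : ∀ v ∈ NSet s₁ st', v ∈ NSet s st' :=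
        fun v hv => ⟨hv.1, fun h => hv.2 (hss₁ h)⟩
      have hiN : i ∉ NSet s st' := fun h => h.2 hi
      have hNsplit : ∀ v ∈ NSet s st', (v = j ∨ v ∈ NSet t s₁) ∨ v ∈ NSet s₁ st' := by
        rintro v ⟨h1, h2⟩
        by_cases h3 : v ∈ s₁.1
        · by_cases h4 : v = j
          · exact Or.inl (Or.inl h4)
          · refine Or.inl (Or.inr ⟨h3, ?_⟩)
            rw [ht]
            simp only [Finset.mem_insert]
            rintro (h | h)
            · exact h4 h
            · exact h2 h
        · exact Or.inr ⟨h1, h3⟩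
      -- parent of j is i
      have hparentj : st'.2 j = i := by
        rw [hfr j hjs₁, P₁.frozen j hjt, ht]
        simp [Function.update]
      -- transported chains
      have chainD : ∀ v ∈ NSet t s₁, ∃ k, 0 < k ∧ ChainK st'.2 (NSet t s₁) v j k := by
        intro v hv
        obtain ⟨k, hk, hc⟩ := P₁.chain v hv
        exact ⟨k, hk, chainK_congr (fun y hy => hfr y (hDs₁ y hy)) hc⟩
      have chain1j : ChainK st'.2 {j} j i 1 :=
        ⟨by simpa using hparentj, fun m hm => by interval_cases m; exact rfl⟩
      have chainDi : ∀ v ∈ NSet t s₁, ∃ k, 0 < k ∧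
          ChainK st'.2 (NSet t s₁ ∪ {j}) v i k := by
        intro v hv
        obtain ⟨k, hk, hc⟩ := chainD v hv
        exact ⟨k + 1, by omega, chainK_comp hc chain1j⟩
      have pD : ∀ v ∈ NSet t s₁, st'.2 v = j ∨ st'.2 v ∈ NSet t s₁ := by
        intro v hv
        obtain ⟨k, hk, hc⟩ := chainD v hv
        rcases eq_or_lt_of_le (Nat.succ_le_of_lt hk) with h | h
        · left; rw [← hc.1, ← h]; simp
        · right
          have := hc.2 1 h
          simpa using this
      have pN₂ : ∀ v ∈ NSet s₁ st', st'.2 v = i ∨ st'.2 v ∈ NSet s₁ st' := by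
        intro v hv
        obtain ⟨k, hk, hc⟩ := P₂.chain v hv
        rcases eq_or_lt_of_le (Nat.succ_le_of_lt hk) with h | h
        · left; rw [← hc.1, ← h]; simp
        · right
          have := hc.2 1 h
          simpa using this
      -- block closedness and separation
      have blockclosed : ∀ a, (a = j ∨ a ∈ NSet t s₁) → ∀ b, G.Adj a b → b ∈ s₁.1 := by
        rintro a (rfl | ha) b hb
        · exact P₁.closed_i b hb
        · exact P₁.closed a ha b hb
      have sep : ∀ a b, (a = j ∨ a ∈ NSet t s₁) → b ∈ NSet s₁ st' → G.Adj a b → False :=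
        fun a b ha hb hab => hN₂notS₁ b hb (blockclosed a ha b hab)
      -- orbit arguments
      have orbit_j : ∀ c k, 0 < k → ChainK st'.2 (NSet s st') j c k →
          c ∈ NSet s st' → False := by
        intro c k hk hc hcN
        have h1 : ChainK st'.2 ({j} : Set (Fin (n+1))) j i 1 := chain1j
        rcases lt_trichotomy k 1 with h | h | h
        · omega
        · subst h; exact hiN (chainK_eq hc h1 ▸ hcN)
        · exact hiN (chainK_cmp h1 hc h)
      have orbit_D : ∀ b c k, b ∈ NSet t s₁ → 0 < k → ChainK st'.2 (NSet s st') b c k →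
          c ∈ NSet s st' → c = j ∨ c ∈ NSet t s₁ := by
        intro b c k hb hk hc hcN
        obtain ⟨k₀, hk₀, hc₀⟩ := chainD b hb
        have hci : ChainK st'.2 (NSet t s₁ ∪ {j}) b i (k₀ + 1) := chainK_comp hc₀ chain1j
        rcases lt_trichotomy k k₀ with h | h | h
        · exact Or.inr (chainK_cmp hc hc₀ h)
        · subst h; exact Or.inl (chainK_eq hc hc₀)
        · rcases lt_trichotomy k (k₀ + 1) with h2 | h2 | h2
          · omega
          · subst h2; exact absurd (chainK_eq hc hci ▸ hcN) hiN
          · exact absurd (chainK_cmp hci hc h2) hiN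
      -- the result
      refine ⟨hsst'.trans (le_refl _), ?_, ?_, ?_, ?_, ?_, ?_, ?_⟩
      · -- frozen
        intro v hv
        have hvj : v ≠ j := fun h => hjs (h ▸ hv)
        rw [hfr v (hss₁ hv), P₁.frozen v (Finset.mem_insert_of_mem hv), ht]
        simp [Function.update, hvj]
      · -- adj
        intro v hv
        rcases hNsplit v hv with (rfl | hD) | hN₂
        · rw [hparentj]; exact hadj v List.mem_cons_self
        · rw [hfr v (hDs₁ v hD)]; exact P₁.adj v hD
        · exact P₂.adj v hN₂
      · -- chain
        intro v hv
        rcases hNsplit v hv with (rfl | hD) | hN₂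
        · exact ⟨1, one_pos, chainK_mono (by rintro x rfl; exact hjN) chain1j⟩
        · obtain ⟨k, hk, hc⟩ := chainDi v hD
          refine ⟨k, hk, chainK_mono ?_ hc⟩
          rintro x (hx | rfl)
          · exact hDN x hx
          · exact hjN
        · obtain ⟨k, hk, hc⟩ := P₂.chain v hN₂
          exact ⟨k, hk, chainK_mono hN₂N hc⟩
      · -- elems
        intro x hx
        rcases List.mem_cons.mp hx with rfl | h
        · exact hs₁st' hjs₁
        · exact P₂.elems x h
      · -- closed
        intro v hv b hb
        rcases hNsplit v hv with hN₁ | hN₂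
        · exact hs₁st' (blockclosed v hN₁ b hb)
        · exact P₂.closed v hN₂ b hb
      · -- compar
        intro a b ha hb hab
        rcases hNsplit a ha with hN₁a | hN₂a
        · rcases hNsplit b hb with hN₁b | hN₂b
          · -- both in block j
            rcases hN₁a with rfl | hDa
            · rcases hN₁b with rfl | hDb
              · exact Or.inl rfl
              · obtain ⟨k, hk, hc⟩ := chainD b hDb
                exact Or.inr (Or.inl ⟨k, hk, chainK_mono hDN hc⟩)
            · rcases hN₁b with rfl | hDb
              · obtain ⟨k, hk, hc⟩ := chainD a hDa
                exact Or.inr (Or.inr ⟨k, hk, chainK_mono hDN hc⟩)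
              · rcases P₁.compar a b hDa hDb hab with h | ⟨k, hk, hc⟩ | ⟨k, hk, hc⟩
                · exact Or.inl h
                · exact Or.inr (Or.inl ⟨k, hk, chainK_mono hDN
                    (chainK_congr (fun y hy => hfr y (hDs₁ y hy)) hc)⟩)
                · exact Or.inr (Or.inr ⟨k, hk, chainK_mono hDN
                    (chainK_congr (fun y hy => hfr y (hDs₁ y hy)) hc)⟩)
          · exact absurd hab (fun h => sep a b hN₁a hN₂b h)
        · rcases hNsplit b hb with hN₁b | hN₂b
          · exact absurd hab.symm (fun h => sep b a hN₁b hN₂a h)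
          · rcases P₂.compar a b hN₂a hN₂b hab with h | ⟨k, hk, hc⟩ | ⟨k, hk, hc⟩
            · exact Or.inl h
            · exact Or.inr (Or.inl ⟨k, hk, chainK_mono hN₂N hc⟩)
            · exact Or.inr (Or.inr ⟨k, hk, chainK_mono hN₂N hc⟩)
      · -- order
        rintro a b c ha hb hc hpar hab hbc ⟨k, hk, hch⟩
        rcases hNsplit c hc with (hcj | hDc) | hN₂c
        · -- c = j, so a = i
          have hai : a = i := by rw [← hpar, hcj, hparentj]
          have hbl : b ∈ j :: l' := by
            by_contra hnb
            exact hb.2 (hpre b (hai ▸ hab) hnb)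
          rcases List.mem_cons.mp hbl with hbj | hbl'
          · exact absurd (hbj.trans hcj.symm) hbc
          · exact hcj ▸ List.rel_of_pairwise_cons hpw hbl'
        · -- c ∈ D : block case
          have haD : a = j ∨ a ∈ NSet t s₁ := by
            have := pD c hDc
            rw [hpar] at this
            exact this
          have hbs₁ : b ∈ s₁.1 := blockclosed a haD b hab
          have hbD : b ∈ NSet t s₁ := by
            rcases hNsplit b hb with (rfl | hDb) | hN₂b
            · exact absurd (hDN c hDc) (fun h => orbit_j c k hk hch h)
            · exact hDb
            · exact absurd hbs₁ (hN₂notS₁ b hN₂b)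
          -- localize chain to D
          have hchD : ChainK st'.2 (NSet t s₁) b c k := by
            refine chainK_localize2 pD hparentj hiN ?_ ?_ hbD hch
            · exact hDnotj c hDc
            · exact fun h => hiN (h ▸ hDN c hDc)
          have hchD' : ChainK s₁.2 (NSet t s₁) b c k :=
            chainK_congr (fun y hy => (hfr y (hDs₁ y hy)).symm) hchD
          refine P₁.order a b c haD hbD hDc ?_ hab hbc ⟨k, hk, hchD'⟩
          rw [← hfr c (hDs₁ c hDc)]
          exact hpar
        · -- c ∈ N₂
          have haN₂ : a = i ∨ a ∈ NSet s₁ st' := by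
            have := pN₂ c hN₂c
            rw [hpar] at this
            exact this
          have hbN₂ : b ∈ NSet s₁ st' := by
            rcases hNsplit b hb with (rfl | hDb) | hN₂b
            · exact absurd (hN₂N c hN₂c) (fun h => orbit_j c k hk hch h)
            · rcases orbit_D b c k hDb hk hch (hN₂N c hN₂c) with hcj | h
              · exact absurd hjs₁ (hcj ▸ hN₂notS₁ c hN₂c)
              · exact absurd (hDs₁ c h) (hN₂notS₁ c hN₂c)
            · exact hN₂b
          have hchN₂ : ChainK st'.2 (NSet s₁ st') b c k :=
            chainK_localize pN₂ hiN (hN₂N c hN₂c) hbN₂ hch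
          exact P₂.order a b c haN₂ hbN₂ hN₂c hpar hab hbc ⟨k, hk, hchN₂⟩

theorem dfs_post : ∀ (fuel : ℕ) (i : Fin (n+1)) (st : St n), i ∈ st.1 →
    (univ \ st.1).card + 1 ≤ fuel → Post G i st (dfsStep G fuel i st) := by
  intro fuel
  induction fuel with
  | zero => intro i st _ h; omega
  | succ fuel IH =>
    intro i st hi hfuel
    have h := fold_post fuel IH i (nbrs G i) st hi (by omega)
      (nbrs_pairwise G i)
      (fun j hj => mem_nbrs.mp hj)
      (fun b hb hnb => absurd (mem_nbrs.mpr hb) hnb)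
    show Post G i st (dfsStep G (fuel+1) i st)
    rw [dfsStep]
    exact { h with closed_i := fun b hb => h.elems b (mem_nbrs.mpr hb) }


section Assembly

theorem kappa_main {n : ℕ} (G : SimpleGraph (Fin (n+1))) (hG : G.Connected) (r : Fin (n+1)) :
    kappaNum G r (dfsParent G r) + (n+1) = G.edgeSet.ncard + 1 := by
  classical
  have hP : Post G r ({r}, fun _ => r) (dfsStep G (n+1) r ({r}, fun _ => r)) := by
    refine dfs_post (n+1) r ({r}, fun _ => r) (Finset.mem_singleton_self r) ?_
    have h1 : ((univ : Finset (Fin (n+1))) \ {r}).card = n := by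
      rw [Finset.sdiff_singleton_eq_erase, Finset.card_erase_of_mem (Finset.mem_univ r)]
      simp
    have h2 : (univ \ (({r}, fun _ => r) : St n).1).card
        = ((univ : Finset (Fin (n+1))) \ {r}).card := rfl
    omega
  set F := dfsStep G (n+1) r ({r}, fun _ => r) with hF
  set par : Fin (n+1) → Fin (n+1) := F.2 with hpardef
  have hpar : dfsParent G r = par := rfl
  -- everything is visited
  have hrF : r ∈ F.1 := hP.mono (Finset.mem_singleton_self r)
  have hclosed : ∀ v ∈ F.1, ∀ b, G.Adj v b → b ∈ F.1 := by
    intro v hv b hb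
    by_cases hvr : v = r
    · exact hP.closed_i b (hvr ▸ hb)
    · exact hP.closed v ⟨hv, by simpa using hvr⟩ b hb
  have huniv : ∀ v, v ∈ F.1 := by
    have hwalk : ∀ (u v : Fin (n+1)) (w : G.Walk u v), u ∈ F.1 → v ∈ F.1 := by
      intro u v w
      induction w with
      | nil => exact id
      | cons h w ih => exact fun hu => ih (hclosed _ hu _ h)
    intro v
    obtain ⟨w⟩ := hG.preconnected r v
    exact hwalk r v w hrF
  have hNiff : ∀ v, v ∈ NSet ({r}, fun _ => r) F ↔ v ≠ r := by
    intro v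
    constructor
    · intro h; simpa using h.2
    · intro h; exact ⟨huniv v, by simpa using h⟩
  -- basic tree properties
  have hroot : par r = r := by
    have := hP.frozen r (Finset.mem_singleton_self r)
    simpa using this
  have hrfix : ∀ m, par^[m] r = r := fun m => Function.iterate_fixed hroot m
  have hreach : ∀ v, ∃ m, par^[m] v = r := by
    intro v
    by_cases hv : v = r
    · exact ⟨0, hv⟩
    · obtain ⟨k, hk, hc⟩ := hP.chain v ((hNiff v).mpr hv)
      exact ⟨k, hc.1⟩
  have hadjpar : ∀ v, v ≠ r → G.Adj (par v) v :=
    fun v hv => hP.adj v ((hNiff v).mpr hv)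
  -- no cycles
  have hper : ∀ v k, 0 < k → par^[k] v = v → v = r := by
    intro v k hk hv
    obtain ⟨m, hm⟩ := hreach v
    have hq : ∀ q, par^[k * q] v = v := by
      intro q
      induction q with
      | zero => simp
      | succ q ih =>
        have : k * (q + 1) = k * q + k := by ring
        rw [this, Function.iterate_add_apply, hv, ih]
    have h1 : par^[k * m] v = v := hq m
    have h2 : k * m ≥ m := Nat.le_mul_of_pos_left m hk
    have h3 : par^[k * m] v = par^[k * m - m] (par^[m] v) := by
      rw [← Function.iterate_add_apply, Nat.sub_add_cancel h2]
    rw [h3, hm, hrfix] at h1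
    exact h1.symm
  -- no two-way ancestry
  have htwo : ∀ a b, (∃ k, 0 < k ∧ par^[k] b = a) → (∃ l, 0 < l ∧ par^[l] a = b) →
      a = r ∧ b = r := by
    rintro a b ⟨k, hk, hka⟩ ⟨l, hl, hlb⟩
    have : par^[l + k] b = b := by rw [Function.iterate_add_apply, hka, hlb]
    have hb : b = r := hper b (l + k) (by omega) this
    subst hb
    rw [hrfix] at hka
    exact ⟨hka.symm, rfl⟩
  -- unique non-root child towards a descendant
  have huniqchild : ∀ a j i₁ i₂, par i₁ = a → par i₂ = a → i₁ ≠ r → i₂ ≠ r →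
      (∃ k, 0 < k ∧ par^[k] j = i₁) → (∃ k, 0 < k ∧ par^[k] j = i₂) → i₁ = i₂ := by
    have key : ∀ a j i₁ i₂, par i₁ = a → par i₂ = a → i₂ ≠ r →
        ∀ s t : ℕ, s < t → par^[s] j = i₁ → par^[t] j = i₂ → False := by
      intro a j i₁ i₂ h1 h2 hr2 s t hst hs htt
      have e1 : par^[s+1] j = a := by
        rw [Function.iterate_succ_apply', hs, h1]
      have e2 : par^[t - s - 1] a = i₂ := by
        rw [← e1, ← Function.iterate_add_apply]
        rw [show t - s - 1 + (s + 1) = t by omega, htt]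
      rcases Nat.eq_zero_or_pos (t - s - 1) with h | h
      · rw [h, Function.iterate_zero_apply] at e2
        have hfix : par i₂ = i₂ := by rw [h2, e2]
        exact hr2 (hper i₂ 1 one_pos (by simpa using hfix))
      · have : par^[t - s] a = a := by
          rw [show t - s = 1 + (t - s - 1) by omega, Function.iterate_add_apply, e2,
            Function.iterate_one, h2]
        have har : a = r := hper a (t - s) (by omega) this
        subst har
        rw [hrfix] at e2
        exact hr2 e2.symm
    rintro a j i₁ i₂ h1 h2 hr1 hr2 ⟨s, _, hs⟩ ⟨t, _, htt⟩
    rcases lt_trichotomy s t with h | h | h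
    · exact absurd (key a j i₁ i₂ h1 h2 hr2 s t h hs htt) not_false
    · rw [← hs, ← htt, h]
    · exact absurd (key a j i₂ i₁ h2 h1 hr1 t s h htt hs) not_false
  -- global comparability
  have hcompar : ∀ a b, G.Adj a b →
      (∃ k, 0 < k ∧ par^[k] b = a) ∨ (∃ k, 0 < k ∧ par^[k] a = b) := by
    intro a b hab
    by_cases har : a = r
    · subst har
      obtain ⟨m, hm⟩ := hreach b
      have : m ≠ 0 := fun h => hab.ne' (by simpa [h] using hm)
      exact Or.inl ⟨m, Nat.pos_of_ne_zero this, hm⟩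
    · by_cases hbr : b = r
      · subst hbr
        obtain ⟨m, hm⟩ := hreach a
        have : m ≠ 0 := fun h => hab.ne (by simpa [h] using hm)
        exact Or.inr ⟨m, Nat.pos_of_ne_zero this, hm⟩
      · rcases hP.compar a b ((hNiff a).mpr har) ((hNiff b).mpr hbr) hab with h | ⟨k, hk, hc⟩ | ⟨k, hk, hc⟩
        · exact absurd h hab.ne
        · exact Or.inl ⟨k, hk, hc.1⟩
        · exact Or.inr ⟨k, hk, hc.1⟩
  -- global ordering property of the DFS tree
  have horder : ∀ a b c, G.Adj a b → par c = a → c ≠ r → b ≠ r → b ≠ c →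
      (∃ k, 0 < k ∧ par^[k] b = c ∧ ∀ m, m < k → par^[m] b ≠ r) → b < c := by
    rintro a b c hab hca hcr hbr hbc ⟨k, hk, hkc, hmem⟩
    refine hP.order a b c ?_ ((hNiff b).mpr hbr) ((hNiff c).mpr hcr) hca hab hbc
      ⟨k, hk, hkc, fun m hm => (hNiff _).mpr (hmem m hm)⟩
    by_cases har : a = r
    · exact Or.inl har
    · exact Or.inr ((hNiff a).mpr har)
  -- the bijection
  set K : Set (Fin (n+1) × Fin (n+1)) :=
    {p | IsKappaInversion G r par p.1 p.2} with hK
  set T : Set (Sym2 (Fin (n+1))) := G.edgeSet \ treeEdges r par with hT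
  set φ : Fin (n+1) × Fin (n+1) → Sym2 (Fin (n+1)) := fun p => s(par p.1, p.2) with hφ
  have hmapsto : Set.MapsTo φ K T := by
    rintro ⟨i, j⟩ hp
    obtain ⟨⟨k, hk, hkj⟩, hji, hir, hadj⟩ : IsKappaInversion G r par i j := hp
    have hE : φ (i, j) ∈ G.edgeSet := by
      show s(par i, j) ∈ G.edgeSet
      rw [SimpleGraph.mem_edgeSet]
      exact hadj
    refine ⟨hE, ?_⟩
    rintro ⟨v, hvr, hv⟩
    have hv' : s(par i, j) = s(par v, v) := hv
    rw [Sym2.eq_iff] at hv'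
    rcases hv' with ⟨h1, h2⟩ | ⟨h1, h2⟩
    · -- par i = par v, j = v
      subst h2
      have hper1 : par^[k+1] j = par j := by
        rw [Function.iterate_succ_apply', hkj, h1]
      have : par j = r := by
        refine hper (par j) k hk ?_
        calc par^[k] (par j) = par^[k+1] j := by rw [← Function.iterate_succ_apply]
        _ = par j := hper1
      have : i = r := by
        have e := Function.iterate_succ_apply par (k-1) j
        rw [show (k-1).succ = k by omega, hkj] at e
        rw [‹par j = r›, hrfix] at e
        exact e
      exact hir this
    · -- par i = v, j = par v
      have : par^[k+2] i = i := by
        have e : j = par^[2] i := by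
          rw [h2, ← h1]
          rfl
        calc par^[k+2] i = par^[k] (par^[2] i) := by
              rw [← Function.iterate_add_apply]
        _ = par^[k] j := by rw [← e]
        _ = i := hkj
      exact hir (hper i (k+2) (by omega) this)
  have hinj : Set.InjOn φ K := by
    rintro ⟨i, j⟩ hp ⟨i', j'⟩ hp' heq
    obtain ⟨⟨k, hk, hkj⟩, hji, hir, hadj⟩ : IsKappaInversion G r par i j := hp
    obtain ⟨⟨k', hk', hkj'⟩, hji', hir', hadj'⟩ : IsKappaInversion G r par i' j' := hp'
    have heq2 : s(par i, j) = s(par i', j') := heq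
    rw [Sym2.eq_iff] at heq2
    rcases heq2 with ⟨h1, h2⟩ | ⟨h1, h2⟩
    · subst h2
      have : i = i' := huniqchild (par i) j i i' rfl h1.symm hir hir'
        ⟨k, hk, hkj⟩ ⟨k', hk', hkj'⟩
      rw [Prod.ext_iff]
      exact ⟨this, rfl⟩
    · exfalso
      -- par i = j', j = par i'
      have ha1 : ∃ l, 0 < l ∧ par^[l] j = j' := by
        refine ⟨k + 1, by omega, ?_⟩
        rw [Function.iterate_succ_apply', hkj, h1]
      have ha2 : ∃ l, 0 < l ∧ par^[l] j' = j := by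
        refine ⟨k' + 1, by omega, ?_⟩
        rw [Function.iterate_succ_apply', hkj', h2]
      obtain ⟨hj'r, hjr⟩ := htwo j' j ha1 ha2
      rw [h1, hj'r, hjr] at hadj
      exact G.loopless.irrefl r hadj
  have hsurj : Set.SurjOn φ K T := by
    have main : ∀ a b, G.Adj a b → (∃ k, 0 < k ∧ par^[k] b = a) →
        s(a, b) ∉ treeEdges r par → s(a, b) ∈ φ '' K := by
      intro a b hab hanc hnt
      have hex : ∃ k, 0 < k ∧ par^[k] b = a := hanc
      set k := Nat.find hex with hkdef
      obtain ⟨hkpos, hka⟩ := Nat.find_spec hex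
      have hmin : ∀ m, m < k → ¬(0 < m ∧ par^[m] b = a) := fun m hm => Nat.find_min hex hm
      have hbr : b ≠ r := by
        intro hb
        subst hb
        rw [hrfix] at hka
        exact hab.ne' hka
      have hmemr : ∀ m, m < k → par^[m] b ≠ r := by
        intro m hm hr0
        rcases Nat.eq_zero_or_pos m with h | h
        · rw [h] at hr0; exact hbr hr0
        · have : par^[k] b = r := by
            rw [show k = (k - m) + m by omega, Function.iterate_add_apply, hr0, hrfix]
          rw [hka] at this
          exact hmin m hm ⟨h, by rw [hr0, ← this]⟩
      rcases eq_or_lt_of_le (Nat.succ_le_of_lt hkpos) with h1 | h1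
      · -- k = 1 : tree edge, contradiction
        exfalso
        apply hnt
        refine ⟨b, hbr, ?_⟩
        have : par b = a := by rw [← hka, ← h1]; simp
        rw [this]
      · -- k ≥ 2
        set c := par^[k-1] b with hc
        have hpc : par c = a := by
          have e : k - 1 + 1 = k := by omega
          have e2 : par (par^[k-1] b) = par^[k-1+1] b :=
            (Function.iterate_succ_apply' par (k-1) b).symm
          rw [hc, e2, e, hka]
        have hcr : c ≠ r := hmemr (k-1) (by omega)
        have hcb : c ≠ b := by
          intro h
          have : par^[k-1] b = b := by rw [← hc, h]
          exact hbr (hper b (k-1) (by omega) this)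
        have hanccb : ∃ l, 0 < l ∧ par^[l] b = c := ⟨k - 1, by omega, rfl⟩
        have hblt : b < c := by
          refine horder a b c hab hpc hcr hbr (fun h => hcb h.symm) ⟨k - 1, by omega, rfl, ?_⟩
          intro m hm
          exact hmemr m (by omega)
        refine ⟨(c, b), show IsKappaInversion G r par c b from
          ⟨hanccb, hblt, hcr, by rw [hpc]; exact hab⟩, ?_⟩
        show s(par c, b) = s(a, b)
        rw [hpc]
    intro e he
    obtain ⟨heE, heT⟩ := he
    induction e using Sym2.ind with
    | _ a b =>
      have hab : G.Adj a b := heE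
      rcases hcompar a b hab with h | h
      · exact main a b hab h heT
      · have hsw : s(a, b) = s(b, a) := Sym2.eq_swap
        rw [hsw] at heT ⊢
        exact main b a hab.symm h heT
  -- counting
  have himg : φ '' K = T := Set.Subset.antisymm (Set.mapsTo_iff_image_subset.mp hmapsto) hsurj
  have hKcard : K.ncard = T.ncard := by
    rw [← himg, Set.ncard_image_of_injOn hinj]
  -- tree edges
  have htree_sub : treeEdges r par ⊆ G.edgeSet := by
    rintro e ⟨v, hvr, rfl⟩
    exact hadjpar v hvr
  have htree_card : (treeEdges r par).ncard = n := by
    have himg2 : treeEdges r par = (fun v => s(par v, v)) '' {v : Fin (n+1) | v ≠ r} := by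
      ext e
      constructor
      · rintro ⟨v, hvr, rfl⟩; exact ⟨v, hvr, rfl⟩
      · rintro ⟨v, hvr, rfl⟩; exact ⟨v, hvr, rfl⟩
    have hinj2 : Set.InjOn (fun v => s(par v, v)) {v : Fin (n+1) | v ≠ r} := by
      intro v hv w hw hvw
      simp only [Sym2.eq_iff] at hvw
      rcases hvw with ⟨_, h⟩ | ⟨h1, h2⟩
      · exact h
      · exfalso
        have : par^[2] v = v := by
          calc par^[2] v = par (par v) := rfl
          _ = v := by rw [h1, h2]
        exact hv (hper v 2 (by omega) this)
    rw [himg2, Set.ncard_image_of_injOn hinj2]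
    have : {v : Fin (n+1) | v ≠ r} = ((univ.erase r : Finset (Fin (n+1))) : Set (Fin (n+1))) := by
      ext v; simp
    rw [this, Set.ncard_coe_finset, Finset.card_erase_of_mem (Finset.mem_univ r)]
    simp
  have hsplit : (G.edgeSet \ treeEdges r par).ncard + (treeEdges r par).ncard
      = G.edgeSet.ncard :=
    Set.ncard_diff_add_ncard_of_subset htree_sub (Set.toFinite _)
  have hκ : kappaNum G r (dfsParent G r) = K.ncard := by
    rw [hpar]
    rfl
  rw [hκ, hKcard, hT]
  omega

end Assembly


end PFG

/-- The number of κ-inversions of the DFS tree of a connected graph `G` equals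
the circuit rank `g = |E| - |V| + 1` (stated additively: `κ + |V| = |E| + 1`). -/
theorem kappa_dfs_eq_circuit_rank {n : ℕ}
    (G : SimpleGraph (Fin (n+1))) (hG : G.Connected) (r : Fin (n+1)) :
    PFG.kappaNum G r (PFG.dfsParent G r) + (n + 1) = G.edgeSet.ncard + 1 :=
  PFG.kappa_main G hG r
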